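/- Let R be a subring of a commutative ring T with a common ideal C containing a T-regular element, and assume T is flat over R. If C is finitely generated as an ideal of R, then B = T/C is faithfully flat as an A = R/C module. -/

import Mathlib

section Aux

variable (T : Type*) [CommRing T] (R : Subring T) (C : Ideal T)

lemma aux_smul_top (hCR : (C : Set T) ⊆ (R : Set T)) :
    (Ideal.comap (algebraMap ↥R T) C) • (⊤ : Submodule ↥R T) = C.restrictScalars ↥R := by
  apply le_antisymm
  · refine Submodule.smul_le.2 fun r hr n _ => ?_
    have : r • n = algebraMap ↥R T r * n := Algebra.smul_def r n
    rw [Submodule.restrictScalars_mem, this]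
    exact Ideal.mul_mem_right _ _ hr
  · intro x hx
    rw [Submodule.restrictScalars_mem] at hx
    have h1 : (⟨x, hCR hx⟩ : ↥R) ∈ Ideal.comap (algebraMap ↥R T) C := by
      exact hx
    have := Submodule.smul_mem_smul h1 (Submodule.mem_top (x := (1 : T)))
    rwa [show (⟨x, hCR hx⟩ : ↥R) • (1 : T) = x from mul_one x] at this

end Aux

open scoped TensorProduct
section Aux2
variable (T : Type*) [CommRing T] (R : Subring T) (C : Ideal T)

set_option maxHeartbeats 1600000 in
set_option synthInstance.maxHeartbeats 800000 in
theorem aux_flat (hCR : (C : Set T) ⊆ (R : Set T)) (hflat : Module.Flat ↥R T) :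
    @Module.Flat (↥R ⧸ Ideal.comap (algebraMap ↥R T) C) (T ⧸ C) _ _
      (Ideal.quotientMap C (algebraMap ↥R T) le_rfl).toModule := by
  set C' : Ideal ↥R := Ideal.comap (algebraMap ↥R T) C with hC'def
  set φ : (↥R ⧸ C') →+* (T ⧸ C) := Ideal.quotientMap C (algebraMap ↥R T) le_rfl with hφdef
  letI : Algebra (↥R ⧸ C') (T ⧸ C) := φ.toAlgebra
  haveI : IsScalarTower ↥R (↥R ⧸ C') (T ⧸ C) := by
    refine IsScalarTower.of_algebraMap_eq (R := ↥R) (S := ↥R ⧸ C') (A := T ⧸ C) fun r => ?_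
    show algebraMap ↥R (T ⧸ C) r = φ (Ideal.Quotient.mk C' r)
    rw [hφdef, Ideal.quotientMap_mk]
    rfl
  have surj : Function.Surjective (algebraMap ↥R (↥R ⧸ C')) := Ideal.Quotient.mk_surjective
  have e : ((↥R ⧸ C') ⊗[↥R] T) ≃ₗ[↥R] (T ⧸ C) :=
    (TensorProduct.quotTensorEquivQuotSMul T C').trans <|
      (Submodule.quotEquivOfEq _ _ (aux_smul_top T R C hCR)).trans
        (Submodule.Quotient.restrictScalarsEquiv ↥R C)
  have eA := e.extendScalarsOfSurjective surj
  exact Module.Flat.of_linearEquiv eA.symm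
end Aux2

/-- `T` flat over `R` and `C` finitely generated as an ideal of `R`
imply `B = T/C` is faithfully flat over `A = R/C` (via the induced ring map). -/
theorem stmt_9 (T : Type*) [CommRing T] (R : Subring T) (C : Ideal T)
    (hCR : (C : Set T) ⊆ (R : Set T))
    (hreg : ∃ c ∈ C, c ∈ nonZeroDivisors T)
    (hflat : Module.Flat ↥R T)
    (hfg : (Ideal.comap (algebraMap ↥R T) C).FG) :
    @Module.FaithfullyFlat (↥R ⧸ Ideal.comap (algebraMap ↥R T) C) (T ⧸ C) _ _
      (Ideal.quotientMap C (algebraMap ↥R T) le_rfl).toModule := by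
  set C' : Ideal ↥R := Ideal.comap (algebraMap ↥R T) C with hC'def
  set φ : (↥R ⧸ C') →+* (T ⧸ C) := Ideal.quotientMap C (algebraMap ↥R T) le_rfl with hφdef
  letI : Module (↥R ⧸ C') (T ⧸ C) := φ.toModule
  refine @Module.FaithfullyFlat.mk _ _ _ _ _ (aux_flat T R C hCR hflat) ?_
  intro m hm htop
  -- pull the maximal ideal back to R
  set M : Ideal ↥R := Ideal.comap (Ideal.Quotient.mk C') m with hMdef
  haveI hMmax : M.IsMaximal :=
    Ideal.comap_isMaximal_of_surjective _ Ideal.Quotient.mk_surjective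
  have hC'M : C' ≤ M := fun x hx => by
    show Ideal.Quotient.mk C' x ∈ m
    rw [Ideal.Quotient.eq_zero_iff_mem.2 hx]
    exact m.zero_mem
  -- 1 ∈ map φ m
  have h1B : (1 : T ⧸ C) ∈ Ideal.map φ m := by
    have h1 : (1 : T ⧸ C) ∈ m • (⊤ : Submodule (↥R ⧸ C') (T ⧸ C)) := by rw [htop]; trivial
    refine Submodule.smul_induction_on h1 (fun a ha b _ => ?_) fun x y hx hy =>
      Ideal.add_mem _ hx hy
    change φ a * b ∈ _
    exact Ideal.mul_mem_right _ _ (Ideal.mem_map_of_mem φ ha)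
  -- hence M T = T
  have hm_eq : Ideal.map (Ideal.Quotient.mk C') M = m :=
    Ideal.map_comap_of_surjective _ Ideal.Quotient.mk_surjective m
  have hcomp : Ideal.map (Ideal.Quotient.mk C) (Ideal.map (algebraMap ↥R T) M) = ⊤ := by
    rw [Ideal.map_map, ← Ideal.quotientMap_comp_mk (le_rfl : C' ≤ C.comap (algebraMap ↥R T)),
      ← Ideal.map_map, hm_eq, Ideal.eq_top_iff_one]
    exact h1B
  have hCle : C ≤ Ideal.map (algebraMap ↥R T) M := fun c hc => by
    have : algebraMap ↥R T ⟨c, hCR hc⟩ = c := rfl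
    rw [← this]
    exact Ideal.mem_map_of_mem _ (hC'M hc)
  have hMT : Ideal.map (algebraMap ↥R T) M = ⊤ := by
    have := congrArg (Ideal.comap (Ideal.Quotient.mk C)) hcomp
    rw [Ideal.comap_map_of_surjective _ Ideal.Quotient.mk_surjective,
      ← RingHom.ker_eq_comap_bot, Ideal.mk_ker, Ideal.comap_top,
      sup_eq_left.2 hCle] at this
    exact this
  -- 1 ∈ M • ⊤ as an ↥R-submodule of T
  have h1T : (1 : T) ∈ M • (⊤ : Submodule ↥R T) := by
    rw [Ideal.smul_top_eq_map, Submodule.restrictScalars_mem, hMT]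
    trivial
  -- key : C' ≤ M • C'
  have hkey : C' ≤ M • C' := by
    intro x hx
    have hxC : algebraMap ↥R T x ∈ C := hx
    -- multiply 1 ∈ M • ⊤ by x
    have h2 : algebraMap ↥R T x ∈ M • ((C.restrictScalars ↥R) : Submodule ↥R T) := by
      have h3 := Submodule.map_smul'' M (⊤ : Submodule ↥R T)
        (LinearMap.mulLeft ↥R (algebraMap ↥R T x))
      have h4 : algebraMap ↥R T x ∈
          Submodule.map (LinearMap.mulLeft ↥R (algebraMap ↥R T x)) (M • ⊤) :=
        ⟨1, h1T, mul_one _⟩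
      rw [h3] at h4
      refine Submodule.smul_mono le_rfl ?_ h4
      rintro y ⟨t, -, rfl⟩
      exact Ideal.mul_mem_right _ _ hxC
    have hCmap : (C.restrictScalars ↥R : Submodule ↥R T) =
        Submodule.map (Algebra.linearMap ↥R T) C' := by
      ext y
      constructor
      · intro hy
        exact ⟨⟨y, hCR hy⟩, hy, rfl⟩
      · rintro ⟨z, hz, rfl⟩
        exact hz
    rw [hCmap, ← Submodule.map_smul''] at h2
    obtain ⟨z, hz, hzx⟩ := h2
    have : z = x := Subtype.coe_injective hzx
    rwa [← this]
  -- Nakayama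
  obtain ⟨r, hr1, hr0⟩ :=
    Submodule.exists_sub_one_mem_and_smul_eq_zero_of_fg_of_le_smul M C' hfg hkey
  obtain ⟨c, hcC, hcreg⟩ := hreg
  have hcC' : (⟨c, hCR hcC⟩ : ↥R) ∈ C' := hcC
  have hrc : r * ⟨c, hCR hcC⟩ = 0 := hr0 _ hcC'
  have hrT : (r : T) * c = 0 := by
    have := congrArg (Subtype.val) hrc
    simpa using this
  have hr : (r : T) = 0 := hcreg.2 _ hrT
  have hr' : r = 0 := Subtype.coe_injective hr
  rw [hr', zero_sub] at hr1
  have : (1 : ↥R) ∈ M := by simpa using M.neg_mem hr1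
  exact hMmax.ne_top ((Ideal.eq_top_iff_one M).2 this)
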